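/- For every k with 0 ≤ k ≤ log₂ n, every rooted forest F of size |F| ≤ 2^k with depth at most d, and every integer interval I ⊆ [1, 3n) with |I| = ⌊c_k·|F|⌋, there exists an ancestry mapping of F into U_k(I). -/

import Mathlib

/-- A rooted forest on a finite vertex type `V`: each vertex has an optional
parent, and the depth of a root is `1` while the depth of a child is one more
than the depth of its parent (in particular the parent relation is acyclic). -/
structure RootedForest (V : Type) [Fintype V] where
  parent : V → Option V
  depth : V → ℕ
  depth_root : ∀ v, parent v = none → depth v = 1
  depth_parent : ∀ v u, parent v = some u → depth v = depth u + 1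

/-- `u` is a (strict) ancestor of `v`: `u` lies on the path from `v` to its root. -/
def RootedForest.Ancestor {V : Type} [Fintype V] (F : RootedForest V) (u v : V) : Prop :=
  Relation.TransGen (fun a b => F.parent a = some b) v u

/-- `c_i = 1 + Σ_{j=1}^i 1/j²`. -/
def cseq (k : ℕ) : ℚ := 1 + ∑ j ∈ Finset.Icc 1 k, (1 : ℚ) / (j : ℚ) ^ 2

/-- `H_i = 1 + 3·n·d·i²/2^{i-1}`. -/
def Hval (n d i : ℕ) : ℚ := 1 + 3 * n * d * (i : ℚ) ^ 2 / 2 ^ (i - 1)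

/-- `J_i = 2·d·c_i·i²`. -/
def Jval (d i : ℕ) : ℚ := 2 * d * cseq i * (i : ℚ) ^ 2

/-- `x_0 = 1` and, for `i ≥ 1`, `x_i = ⌈2^{i-1}/(d·i²)⌉` (ceiling division). -/
def xval (d i : ℕ) : ℕ := if i = 0 then 1 else (2 ^ (i - 1) + d * i ^ 2 - 1) / (d * i ^ 2)

/-- The interval associated with a triplet: `I_{0,ν,0} = {ν}` and, for `i ≥ 1`,
`I_{i,h,j} = [x_i·h, x_i·(h+j))`. -/
def tripInterval (d : ℕ) (t : ℕ × ℕ × ℕ) : Set ℕ :=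
  if t.1 = 0 then {t.2.1}
  else Set.Ico (xval d t.1 * t.2.1) (xval d t.1 * (t.2.1 + t.2.2))

/-- `U_k(I)`: the triplets `(0,ν,0)` with `ν ∈ I`, together with the triplets
`(i,h,j)` with `1 ≤ i ≤ k`, `h ∈ [0,H_i)`, `j ∈ [1,J_i)` whose associated
interval is contained in `I`. -/
def Uset (n d k : ℕ) (I : Set ℕ) : Set (ℕ × ℕ × ℕ) :=
  {t | (t.1 = 0 ∧ t.2.2 = 0 ∧ t.2.1 ∈ I) ∨
       (1 ≤ t.1 ∧ t.1 ≤ k ∧ ((t.2.1 : ℚ) < Hval n d t.1) ∧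
        1 ≤ t.2.2 ∧ ((t.2.2 : ℚ) < Jval d t.1) ∧ tripInterval d t ⊆ I)}


namespace AncMap

open Classical

inductive RTree : Type where
  | node : List RTree → RTree

instance : Inhabited RTree := ⟨.node []⟩

namespace RTree

lemma sizeOf_lt_of_mem {c : RTree} {cs : List RTree} (h : c ∈ cs) :
    sizeOf c < sizeOf (RTree.node cs) := by
  have := List.sizeOf_lt_of_mem h
  simp only [RTree.node.sizeOf_spec]
  omega

def size : RTree → ℕ
  | .node cs => 1 + (cs.attach.map (fun c => size c.1)).sum
decreasing_by exact sizeOf_lt_of_mem c.2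

def depth : RTree → ℕ
  | .node cs => 1 + (cs.attach.map (fun c => depth c.1)).foldr max 0
decreasing_by exact sizeOf_lt_of_mem c.2

lemma my_ind (P : RTree → Prop) (h : ∀ cs, (∀ c ∈ cs, P c) → P (.node cs)) :
    ∀ t, P t
  | .node cs => h cs (fun c hc => my_ind P h c)
decreasing_by exact sizeOf_lt_of_mem hc

lemma size_node (cs : List RTree) : size (.node cs) = 1 + (cs.map size).sum := by
  rw [size]
  congr 1
  exact (List.attach_map_val (l := cs) (f := size)).symm ▸ rfl

lemma depth_node (cs : List RTree) :
    depth (.node cs) = 1 + (cs.map depth).foldr max 0 := by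
  rw [depth]
  congr 1
  exact (List.attach_map_val (l := cs) (f := depth)).symm ▸ rfl

lemma one_le_size (t : RTree) : 1 ≤ t.size := by
  cases t with
  | node cs => rw [size_node]; omega

lemma one_le_depth (t : RTree) : 1 ≤ t.depth := by
  cases t with
  | node cs => rw [depth_node]; omega

lemma size_le_of_mem {c : RTree} {cs : List RTree} (h : c ∈ cs) :
    c.size ≤ (cs.map size).sum :=
  List.le_sum_of_mem (List.mem_map_of_mem (f := size) h)

lemma depth_le_of_mem {c : RTree} {cs : List RTree} (h : c ∈ cs) :
    c.depth + 1 ≤ depth (.node cs) := by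
  rw [depth_node]
  have : c.depth ≤ (cs.map depth).foldr max 0 := by
    have := List.le_max_of_le (l := cs.map depth) (List.mem_map_of_mem (f := depth) h) le_rfl
    simpa using this
  omega

def IsPath : List ℕ → RTree → Prop
  | [], _ => True
  | i :: p, .node cs => ∃ h : i < cs.length, IsPath p cs[i]

@[simp] lemma isPath_nil (t : RTree) : IsPath [] t := trivial

lemma isPath_cons {i : ℕ} {p : List ℕ} {cs : List RTree} :
    IsPath (i :: p) (.node cs) ↔ ∃ h : i < cs.length, IsPath p cs[i] := Iff.rfl

end RTree

def sizeF (F : List RTree) : ℕ := (F.map RTree.size).sum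

def FIsPath (F : List RTree) : List ℕ → Prop
  | [] => False
  | i :: p => ∃ h : i < F.length, RTree.IsPath p F[i]




lemma cseq_nonneg (k : ℕ) : 0 ≤ cseq k := by
  unfold cseq
  have : 0 ≤ ∑ j ∈ Finset.Icc 1 k, (1 : ℚ) / (j : ℚ) ^ 2 :=
    Finset.sum_nonneg (fun j _ => by positivity)
  linarith

lemma one_le_cseq (k : ℕ) : 1 ≤ cseq k := by
  unfold cseq
  have : 0 ≤ ∑ j ∈ Finset.Icc 1 k, (1 : ℚ) / (j : ℚ) ^ 2 :=
    Finset.sum_nonneg (fun j _ => by positivity)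
  linarith

lemma cseq_succ (k : ℕ) : cseq (k + 1) = cseq k + 1 / ((k : ℚ) + 1) ^ 2 := by
  unfold cseq
  rw [Finset.sum_Icc_succ_top (by omega : 1 ≤ k + 1)]
  push_cast
  ring

lemma cseq_mono {k k' : ℕ} (h : k ≤ k') : cseq k ≤ cseq k' := by
  unfold cseq
  have := Finset.sum_le_sum_of_subset_of_nonneg
    (Finset.Icc_subset_Icc_right h) (fun j _ _ => by positivity : ∀ j ∈ Finset.Icc 1 k', j ∉ Finset.Icc 1 k →  (0:ℚ) ≤ 1 / (j:ℚ)^2)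
  linarith

lemma two_le_cseq {k : ℕ} (h : 1 ≤ k) : 2 ≤ cseq k := by
  have h1 : cseq 1 ≤ cseq k := cseq_mono h
  have : cseq 1 = 2 := by norm_num [cseq]
  linarith

/-- floors superadditive -/
lemma floor_superadd (c : ℚ) (hc : 0 ≤ c) (A B : ℕ) :
    ⌊c * A⌋₊ + ⌊c * B⌋₊ ≤ ⌊c * (A + B : ℕ)⌋₊ := by
  rw [Nat.le_floor_iff (by positivity)]
  push_cast
  have hA := Nat.floor_le (by positivity : (0:ℚ) ≤ c * A)
  have hB := Nat.floor_le (by positivity : (0:ℚ) ≤ c * B)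
  push_cast at hA hB
  nlinarith

lemma floor_mono_mul {c c' : ℚ} (h : c ≤ c') (hc : 0 ≤ c) (A : ℕ) :
    ⌊c * A⌋₊ ≤ ⌊c' * A⌋₊ :=
  Nat.floor_mono (by nlinarith [Nat.cast_nonneg (α := ℚ) A])

lemma one_le_xval (d i : ℕ) (hd : 1 ≤ d) : 1 ≤ xval d i := by
  unfold xval
  split
  · omega
  · rename_i hi
    have hdi : 1 ≤ d * i ^ 2 := by
      have : 1 ≤ i := by omega
      nlinarith
    have h2 : 1 ≤ 2 ^ (i - 1) := Nat.one_le_two_pow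
    exact Nat.one_le_div_iff hdi |>.mpr (by omega)

lemma xval_succ (d k : ℕ) : xval d (k+1) = (2 ^ k + d * (k+1) ^ 2 - 1) / (d * (k+1) ^ 2) := by
  simp [xval]

/-- lower bound: `2^k ≤ x * (d (k+1)²)` -/
lemma xval_mul_ge (d k : ℕ) (hd : 1 ≤ d) : 2 ^ k ≤ xval d (k+1) * (d * (k+1) ^ 2) := by
  rw [xval_succ]
  have hb : 0 < d * (k+1)^2 := by positivity
  have h2 : 1 ≤ 2 ^ k := Nat.one_le_two_pow
  set b := d * (k+1)^2 with hbdef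
  have hdm := Nat.div_add_mod (2 ^ k + b - 1) b
  have hmlt : (2 ^ k + b - 1) % b < b := Nat.mod_lt _ hb
  set q := (2 ^ k + b - 1) / b
  have : b * q ≥ 2 ^ k := by omega
  nlinarith [this]

/-- upper bound in ℚ : `x ≤ (2^k - 1)/(d (k+1)²) + 1` -/
lemma xval_le_q (d k : ℕ) (hd : 1 ≤ d) :
    (xval d (k+1) : ℚ) ≤ ((2:ℚ) ^ k - 1) / (d * ((k:ℚ)+1) ^ 2) + 1 := by
  have hb : 0 < d * (k+1)^2 := by positivity
  have hx : xval d (k+1) * (d * (k+1)^2) ≤ 2 ^ k - 1 + d * (k+1)^2 := by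
    rw [xval_succ]
    have h2 : 1 ≤ 2 ^ k := Nat.one_le_two_pow
    have := Nat.div_mul_le_self (2 ^ k + d * (k+1) ^ 2 - 1) (d * (k+1)^2)
    omega
  have hbq : (0:ℚ) < d * ((k:ℚ)+1)^2 := by positivity
  rw [div_add' _ _ _ (ne_of_gt hbq), le_div_iff₀ hbq]
  have h2 : 1 ≤ 2 ^ k := Nat.one_le_two_pow
  have := (Nat.cast_le (α := ℚ)).mpr hx
  rw [Nat.cast_add, Nat.cast_sub h2] at this
  push_cast at this ⊢
  nlinarith [this]




lemma cseq_mul_nat_nonneg (k N : ℕ) : (0:ℚ) ≤ cseq k * (N:ℚ) :=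
  mul_nonneg (cseq_nonneg k) (Nat.cast_nonneg N)

lemma key_ineq (d k q N : ℕ) (hd : 1 ≤ d) (hq : 1 ≤ q) (hqd : q + 1 ≤ d)
    (hN : 2 ^ k < N) :
    ((q : ℚ) + 1) * xval d (k+1) ≤ cseq k * q + N / ((k : ℚ) + 1) ^ 2 := by
  have hK2 : (0:ℚ) < ((k:ℚ)+1)^2 := by positivity
  have hd0 : (0:ℚ) < (d:ℚ) := by exact_mod_cast hd
  have hx := xval_le_q d k hd
  have h2k : (1:ℚ) ≤ (2:ℚ)^k := by exact_mod_cast Nat.one_le_two_pow (n := k)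
  have hNq : (2:ℚ)^k + 1 ≤ (N:ℚ) := by
    have : ((2^k + 1 : ℕ) : ℚ) ≤ (N:ℚ) := by exact_mod_cast hN
    push_cast at this; linarith
  have hq1 : (1:ℚ) ≤ (q:ℚ) := by exact_mod_cast hq
  have hqd' : (q:ℚ) + 1 ≤ (d:ℚ) := by exact_mod_cast hqd
  have hxq : (0:ℚ) ≤ (xval d (k+1) : ℚ) := Nat.cast_nonneg _
  have step1 : ((q:ℚ)+1) * xval d (k+1) ≤ ((q:ℚ)+1) * (((2:ℚ)^k - 1) / (d * ((k:ℚ)+1)^2)) + ((q:ℚ)+1) := by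
    nlinarith [hx]
  have step2 : ((q:ℚ)+1) * (((2:ℚ)^k - 1) / (d * ((k:ℚ)+1)^2)) ≤ ((2:ℚ)^k - 1) / ((k:ℚ)+1)^2 := by
    rw [← mul_div_assoc, div_le_div_iff₀ (by positivity) hK2]
    nlinarith [mul_le_mul_of_nonneg_right hqd'
      (mul_nonneg (by linarith : (0:ℚ) ≤ (2:ℚ)^k - 1) (le_of_lt hK2))]
  have step3 : ((2:ℚ)^k - 1) / ((k:ℚ)+1)^2 + ((q:ℚ)+1) ≤ cseq k * q + N / ((k:ℚ)+1)^2 := by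
    have hNd : ((2:ℚ)^k - 1) / ((k:ℚ)+1)^2 + 2 / ((k:ℚ)+1)^2 ≤ (N:ℚ) / ((k:ℚ)+1)^2 := by
      rw [← add_div, div_le_div_iff₀ hK2 hK2]
      nlinarith
    rcases Nat.eq_zero_or_pos k with hk0 | hk1
    · subst hk0
      have hc : cseq 0 = 1 := by norm_num [cseq]
      rw [hc]
      simp only [Nat.cast_zero] at hNd ⊢
      norm_num at hNd ⊢
      linarith
    · have hc : 2 ≤ cseq k := two_le_cseq hk1
      have : (q:ℚ) + 1 ≤ cseq k * q := by nlinarith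
      have h2 : (0:ℚ) ≤ 2 / ((k:ℚ)+1)^2 := by positivity
      linarith
  linarith

lemma chain_budget (d k q N : ℕ) (hd : 1 ≤ d) (hq : 1 ≤ q) (hqd : q + 1 ≤ d)
    (hN : 2 ^ k < N) (hqN : q ≤ N) :
    ⌊cseq k * ((N - q : ℕ) : ℚ)⌋₊ + (q + 1) * xval d (k+1) ≤ ⌊cseq (k+1) * (N : ℚ)⌋₊ := by
  rw [Nat.le_floor_iff (cseq_mul_nat_nonneg (k+1) N)]
  have h1 : (⌊cseq k * ((N - q : ℕ) : ℚ)⌋₊ : ℚ) ≤ cseq k * ((N - q : ℕ) : ℚ) :=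
    Nat.floor_le (cseq_mul_nat_nonneg k (N - q))
  have h2 := key_ineq d k q N hd hq hqd hN
  have hsub : ((N - q : ℕ) : ℚ) = (N : ℚ) - (q : ℚ) := by rw [Nat.cast_sub hqN]
  have h1' : (⌊cseq k * ((N - q : ℕ) : ℚ)⌋₊ : ℚ) ≤ cseq k * ((N:ℚ) - (q:ℚ)) := by
    rw [← hsub]; exact h1
  rw [cseq_succ]
  push_cast
  have e1 : (cseq k + 1/((k:ℚ)+1)^2) * (N:ℚ) = cseq k * ((N:ℚ) - (q:ℚ)) + (cseq k * (q:ℚ) + (N:ℚ)/((k:ℚ)+1)^2) := by ring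
  rw [e1]
  linarith

def ru (a x : ℕ) : ℕ := x * ((a + x - 1) / x)

lemma le_ru (a x : ℕ) (hx : 1 ≤ x) : a ≤ ru a x := by
  unfold ru
  have hdm := Nat.div_add_mod (a + x - 1) x
  have hlt : (a + x - 1) % x < x := Nat.mod_lt _ hx
  omega

lemma ru_le (a x : ℕ) (hx : 1 ≤ x) : ru a x ≤ a + x - 1 := Nat.mul_div_le _ _

lemma dvd_ru (a x : ℕ) : x ∣ ru a x := Dvd.intro _ rfl

lemma Uset_mono {n d k k' : ℕ} {I I' : Set ℕ} (hk : k ≤ k') (hI : I ⊆ I') :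
    Uset n d k I ⊆ Uset n d k' I' := by
  rintro ⟨i, h, j⟩ (⟨h1, h2, h3⟩ | ⟨h1, h2, h3, h4, h5, h6⟩)
  · exact Or.inl ⟨h1, h2, hI h3⟩
  · exact Or.inr ⟨h1, le_trans h2 hk, h3, h4, h5, fun y hy => hI (h6 hy)⟩

lemma trip_subset_of_mem {n d k : ℕ} {I : Set ℕ} {t : ℕ × ℕ × ℕ}
    (h : t ∈ Uset n d k I) : tripInterval d t ⊆ I := by
  obtain ⟨i, hh, j⟩ := t
  rcases h with ⟨h1, h2, h3⟩ | ⟨h1, h2, h3, h4, h5, h6⟩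
  · have h1' : i = 0 := by simpa using h1
    subst h1'
    intro y hy
    simp only [tripInterval, if_pos, Set.mem_singleton_iff] at hy
    subst hy
    simpa using h3
  · exact h6

lemma trip_nonempty_of_mem {n d k : ℕ} {I : Set ℕ} {t : ℕ × ℕ × ℕ} (hd : 1 ≤ d)
    (h : t ∈ Uset n d k I) : (tripInterval d t).Nonempty := by
  obtain ⟨i, hh, j⟩ := t
  rcases h with ⟨h1, h2, h3⟩ | ⟨h1, h2, h3, h4, h5, h6⟩
  · have h1' : i = 0 := by simpa using h1
    subst h1'
    exact ⟨hh, by simp [tripInterval]⟩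
  · have hne : i ≠ 0 := by simp at h1; omega
    have heq : tripInterval d (i, hh, j) = Set.Ico (xval d i * hh) (xval d i * (hh + j)) := by
      simp [tripInterval, hne]
    rw [heq, Set.nonempty_Ico]
    have hx : 1 ≤ xval d i := one_le_xval d i hd
    have hj : 1 ≤ j := h4
    nlinarith

lemma jval_bound (n d k j N : ℕ) (hd : 1 ≤ d) (hN : N ≤ 2 ^ (k+1))
    (hj : xval d (k+1) * j < ⌊cseq (k+1) * (N : ℚ)⌋₊) :
    (j : ℚ) < Jval d (k+1) := by
  have hx1 : 1 ≤ xval d (k+1) := one_le_xval d (k+1) hd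
  have hxq : (0:ℚ) < (xval d (k+1) : ℚ) := by exact_mod_cast hx1
  have hxmul := xval_mul_ge d k hd
  have hxmulq : (2:ℚ)^k ≤ (xval d (k+1) : ℚ) * ((d:ℚ) * ((k:ℚ)+1)^2) := by
    have := (Nat.cast_le (α := ℚ)).mpr hxmul
    push_cast at this
    linarith
  have h1 : (xval d (k+1) : ℚ) * j < cseq (k+1) * N := by
    have hfl : (⌊cseq (k+1) * (N : ℚ)⌋₊ : ℚ) ≤ cseq (k+1) * N :=
      Nat.floor_le (cseq_mul_nat_nonneg (k+1) N)
    have := (Nat.cast_lt (α := ℚ)).mpr hj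
    push_cast at this
    linarith
  have h2 : cseq (k+1) * (N:ℚ) ≤ cseq (k+1) * (2:ℚ)^(k+1) := by
    have hNq : (N:ℚ) ≤ (2:ℚ)^(k+1) := by exact_mod_cast hN
    nlinarith [one_le_cseq (k+1)]
  have h3 : cseq (k+1) * (2:ℚ)^(k+1) ≤ Jval d (k+1) * (xval d (k+1) : ℚ) := by
    unfold Jval
    push_cast
    have hc := one_le_cseq (k+1)
    have h2e : (2:ℚ)^(k+1) = 2 * (2:ℚ)^k := by ring
    rw [h2e]
    nlinarith
  have : (xval d (k+1) : ℚ) * j < Jval d (k+1) * (xval d (k+1) : ℚ) := by linarith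
  nlinarith

lemma hval_bound (n d k h : ℕ) (hd : 1 ≤ d)
    (hh : xval d (k+1) * h + 1 ≤ 3 * n) :
    (h : ℚ) < Hval n d (k+1) := by
  have hxmul := xval_mul_ge d k hd
  have h2q : (0:ℚ) < (2:ℚ)^k := by positivity
  have c1 : (xval d (k+1) : ℚ) * h + 1 ≤ 3 * n := by exact_mod_cast hh
  have c2 : (2:ℚ)^k ≤ (xval d (k+1) : ℚ) * ((d:ℚ) * ((k:ℚ)+1)^2) := by
    have := (Nat.cast_le (α := ℚ)).mpr hxmul
    push_cast at this
    linarith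
  have hq0 : (0:ℚ) ≤ (h:ℚ) := Nat.cast_nonneg _
  have hkd : (1:ℚ) ≤ (d:ℚ) * ((k:ℚ)+1)^2 := by
    have hd1 : (1:ℚ) ≤ (d:ℚ) := by exact_mod_cast hd
    have hk1 : (1:ℚ) ≤ ((k:ℚ)+1)^2 := by nlinarith [sq_nonneg (k:ℚ), Nat.cast_nonneg (α := ℚ) k]
    nlinarith
  have goal' : (h:ℚ) * 2^k < 2^k + 3*(n:ℚ)*((d:ℚ)*((k:ℚ)+1)^2) := by
    nlinarith [mul_le_mul_of_nonneg_left c2 hq0]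
  unfold Hval
  have hk1 : (k + 1 : ℕ) - 1 = k := by omega
  rw [hk1]
  push_cast
  rw [show (1:ℚ) + 3*(n:ℚ)*(d:ℚ)*((k:ℚ)+1)^2/2^k = (2^k + 3*(n:ℚ)*((d:ℚ)*((k:ℚ)+1)^2))/2^k from by field_simp]
  rw [lt_div_iff₀ h2q]
  linarith



open RTree

structure Spec (n d k : ℕ) (P : List ℕ → Prop) (a W : ℕ) (f : List ℕ → ℕ × ℕ × ℕ) : Prop where
  mem : ∀ p, P p → f p ∈ Uset n d k (Set.Ico a (a + W))
  nest : ∀ p q, P p → P q → p <+: q → p ≠ q →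
    tripInterval d (f q) ⊂ tripInterval d (f p)
  disj : ∀ p q, P p → P q → ¬ p <+: q → ¬ q <+: p →
    Disjoint (tripInterval d (f p)) (tripInterval d (f q))

def TreeStmt (n d k : ℕ) : Prop :=
  ∀ t : RTree, t.size ≤ 2 ^ k → t.depth ≤ d → ∀ a : ℕ, 1 ≤ a →
    a + ⌊cseq k * (t.size : ℚ)⌋₊ ≤ 3 * n →
    ∃ f, Spec n d k (fun p => IsPath p t) a ⌊cseq k * (t.size : ℚ)⌋₊ f

def PackStmt (n d k : ℕ) : Prop :=
  ∀ F : List RTree, (∀ t ∈ F, t.size ≤ 2 ^ k ∧ t.depth ≤ d) → ∀ a : ℕ, 1 ≤ a →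
    a + ⌊cseq k * (sizeF F : ℚ)⌋₊ ≤ 3 * n →
    ∃ f, Spec n d k (FIsPath F) a ⌊cseq k * (sizeF F : ℚ)⌋₊ f

lemma sizeF_cons (t : RTree) (F : List RTree) : sizeF (t :: F) = t.size + sizeF F := by
  simp [sizeF]

lemma not_FIsPath_nil (p : List ℕ) : ¬ FIsPath [] p := by
  cases p with
  | nil => simp [FIsPath]
  | cons i q => simp [FIsPath]

lemma FIsPath_cons_zero (t : RTree) (F : List RTree) (p : List ℕ) :
    FIsPath (t :: F) (0 :: p) ↔ IsPath p t := by
  simp [FIsPath]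

lemma FIsPath_cons_succ (t : RTree) (F : List RTree) (i : ℕ) (p : List ℕ) :
    FIsPath (t :: F) ((i+1) :: p) ↔ FIsPath F (i :: p) := by
  simp [FIsPath]

lemma floor_cseq_mono (k : ℕ) {A B : ℕ} (h : A ≤ B) :
    ⌊cseq k * (A : ℚ)⌋₊ ≤ ⌊cseq k * (B : ℚ)⌋₊ := by
  apply Nat.floor_mono
  have : (A:ℚ) ≤ (B:ℚ) := by exact_mod_cast h
  nlinarith [cseq_nonneg k]

lemma Ico_disjoint {a b a' b' : ℕ} (h : b ≤ a') :
    Disjoint (Set.Ico a b) (Set.Ico a' b' : Set ℕ) := by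
  rw [Set.disjoint_left]
  rintro y ⟨_, h2⟩ ⟨h3, _⟩
  omega

lemma pack_of_tree {n d k : ℕ} (ht : TreeStmt n d k) : PackStmt n d k := by
  intro F
  induction F with
  | nil =>
    intro _ a _ _
    refine ⟨fun _ => (0,0,0), ?_, ?_, ?_⟩
    · intro p hp; exact absurd hp (not_FIsPath_nil p)
    · intro p q hp _ _ _; exact absurd hp (not_FIsPath_nil p)
    · intro p q hp _ _ _; exact absurd hp (not_FIsPath_nil p)
  | cons t F' ih =>
    intro hF a ha h3n
    have hsz := sizeF_cons t F'
    set wt := ⌊cseq k * (t.size : ℚ)⌋₊ with hwt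
    set wF := ⌊cseq k * (sizeF F' : ℚ)⌋₊ with hwF
    set W := ⌊cseq k * (sizeF (t :: F') : ℚ)⌋₊ with hW
    have hsup : wt + wF ≤ W := by
      rw [hwt, hwF, hW, hsz]
      exact floor_superadd (cseq k) (cseq_nonneg k) t.size (sizeF F')
    have h3t : a + wt ≤ 3 * n := by omega
    have h3F : (a + wt) + wF ≤ 3 * n := by omega
    obtain ⟨ft, st⟩ := ht t (hF t (by simp)).1 (hF t (by simp)).2 a ha h3t
    obtain ⟨fF, sF⟩ := ih (fun u hu => hF u (by simp [hu])) (a + wt) (by omega) h3F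
    refine ⟨fun p => match p with
      | [] => (0,0,0)
      | 0 :: p' => ft p'
      | (i+1) :: p' => fF (i :: p'), ?_, ?_, ?_⟩
    · intro p hp
      cases p with
      | nil => exact absurd hp (by simp [FIsPath])
      | cons i p' =>
        cases i with
        | zero =>
          have := st.mem p' ((FIsPath_cons_zero t F' p').mp hp)
          refine Uset_mono le_rfl ?_ this
          apply Set.Ico_subset_Ico le_rfl
          omega
        | succ i =>
          have := sF.mem (i :: p') ((FIsPath_cons_succ t F' i p').mp hp)
          refine Uset_mono le_rfl ?_ this
          apply Set.Ico_subset_Ico (by omega)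
          omega
    · intro p q hp hq hpre hne
      cases p with
      | nil => exact absurd hp (by simp [FIsPath])
      | cons i p' =>
        cases q with
        | nil => exact absurd (List.eq_nil_of_prefix_nil hpre) (by simp)
        | cons j q' =>
          have hij : i = j := (List.cons_prefix_cons.mp hpre).1
          subst hij
          have hpre' := (List.cons_prefix_cons.mp hpre).2
          have hne' : p' ≠ q' := fun h => hne (by rw [h])
          cases i with
          | zero =>
            rw [FIsPath_cons_zero] at hp hq
            exact st.nest p' q' hp hq hpre' hne'
          | succ i =>
            rw [FIsPath_cons_succ] at hp hq
            refine sF.nest (i :: p') (i :: q') hp hq ?_ ?_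
            · rw [List.cons_prefix_cons]; exact ⟨rfl, hpre'⟩
            · intro h
              exact hne' (by injection h)
    · intro p q hp hq hpre hqre
      cases p with
      | nil => exact absurd (List.nil_prefix) hpre
      | cons i p' =>
        cases q with
        | nil => exact absurd (List.nil_prefix) hqre
        | cons j q' =>
          cases i with
          | zero =>
            rw [FIsPath_cons_zero] at hp
            cases j with
            | zero =>
              rw [FIsPath_cons_zero] at hq
              refine st.disj p' q' hp hq ?_ ?_
              · intro h; exact hpre (by rw [List.cons_prefix_cons]; exact ⟨rfl, h⟩)
              · intro h; exact hqre (by rw [List.cons_prefix_cons]; exact ⟨rfl, h⟩)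
            | succ j =>
              rw [FIsPath_cons_succ] at hq
              have h1 : tripInterval d (ft p') ⊆ Set.Ico a (a + wt) :=
                trip_subset_of_mem (st.mem p' hp)
              have h2 : tripInterval d (fF (j :: q')) ⊆ Set.Ico (a + wt) (a + wt + wF) :=
                trip_subset_of_mem (sF.mem (j :: q') hq)
              exact Set.disjoint_of_subset h1 h2 (Ico_disjoint le_rfl)
          | succ i =>
            rw [FIsPath_cons_succ] at hp
            cases j with
            | zero =>
              rw [FIsPath_cons_zero] at hq
              have h1 : tripInterval d (fF (i :: p')) ⊆ Set.Ico (a + wt) (a + wt + wF) :=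
                trip_subset_of_mem (sF.mem (i :: p') hp)
              have h2 : tripInterval d (ft q') ⊆ Set.Ico a (a + wt) :=
                trip_subset_of_mem (st.mem q' hq)
              exact Set.disjoint_of_subset h1 h2 (Ico_disjoint le_rfl).symm
            | succ j =>
              rw [FIsPath_cons_succ] at hq
              refine sF.disj (i :: p') (j :: q') hp hq ?_ ?_
              · intro h; rw [List.cons_prefix_cons] at h
                exact hpre (by rw [List.cons_prefix_cons]; exact ⟨by omega, h.2⟩)
              · intro h; rw [List.cons_prefix_cons] at h
                exact hqre (by rw [List.cons_prefix_cons]; exact ⟨by omega, h.2⟩)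



open RTree

lemma trip_chain_eq (d k α β : ℕ) (hd : 1 ≤ d) (h1 : xval d (k+1) ∣ α)
    (h2 : xval d (k+1) ∣ β) (hle : α ≤ β) :
    tripInterval d (k+1, α / xval d (k+1), (β - α) / xval d (k+1)) = Set.Ico α β := by
  set x := xval d (k+1) with hxdef
  have hx1 : 1 ≤ x := one_le_xval d (k+1) hd
  rw [tripInterval]
  rw [if_neg (by simp)]
  have e1 : x * (α / x) = α := Nat.mul_div_cancel' h1
  have hsub : x ∣ β - α := Nat.dvd_sub h2 h1
  have e2 : x * (α / x + (β - α) / x) = β := by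
    rw [Nat.mul_add, e1, Nat.mul_div_cancel' hsub]
    omega
  simp only []
  rw [e1, e2]

lemma two_le_depth_of_ne_nil {cs : List RTree} (h : cs ≠ []) : 2 ≤ depth (.node cs) := by
  obtain ⟨c, hc⟩ := List.exists_mem_of_ne_nil cs h
  have := depth_le_of_mem hc
  have := one_le_depth c
  omega

lemma size_node_append (L R : List RTree) (b : RTree) :
    size (.node (L ++ b :: R)) = 1 + sizeF L + b.size + sizeF R := by
  rw [size_node]
  simp [sizeF]
  ring

lemma path_trans_left {L R : List RTree} {b : RTree} {i : ℕ} {p : List ℕ}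
    (h : i < L.length) :
    IsPath (i :: p) (.node (L ++ b :: R)) ↔ FIsPath L (i :: p) := by
  rw [isPath_cons]
  constructor
  · rintro ⟨h', hp⟩
    refine ⟨h, ?_⟩
    rwa [List.getElem_append_left h] at hp
  · rintro ⟨h', hp⟩
    refine ⟨by simp; omega, ?_⟩
    rwa [List.getElem_append_left h]

lemma path_trans_mid {L R : List RTree} {b : RTree} {p : List ℕ} :
    IsPath (L.length :: p) (.node (L ++ b :: R)) ↔ IsPath p b := by
  rw [isPath_cons]
  have hlen : L.length < (L ++ b :: R).length := by simp
  have hget : (L ++ b :: R)[L.length] = b := by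
    rw [List.getElem_append_right (le_refl L.length)]
    simp
  constructor
  · rintro ⟨h', hp⟩
    rwa [hget] at hp
  · intro hp
    exact ⟨hlen, by rwa [hget]⟩

lemma path_trans_right {L R : List RTree} {b : RTree} {i : ℕ} {p : List ℕ}
    (h : L.length < i) :
    IsPath (i :: p) (.node (L ++ b :: R)) ↔ FIsPath R ((i - L.length - 1) :: p) := by
  obtain ⟨m, rfl⟩ : ∃ m, i = L.length + (m + 1) := ⟨i - L.length - 1, by omega⟩
  have hidx : L.length + (m + 1) - L.length - 1 = m := by omega
  rw [hidx, isPath_cons]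
  constructor
  · rintro ⟨h', hp⟩
    have hlen : m < R.length := by simp at h'; omega
    refine ⟨hlen, ?_⟩
    rw [List.getElem_append_right (by omega : L.length ≤ L.length + (m + 1))] at hp
    have hidx2 : L.length + (m + 1) - L.length = m + 1 := by omega
    simp only [hidx2, List.getElem_cons_succ] at hp
    exact hp
  · rintro ⟨h', hp⟩
    have hlen : L.length + (m + 1) < (L ++ b :: R).length := by simp; omega
    refine ⟨hlen, ?_⟩
    rw [List.getElem_append_right (by omega : L.length ≤ L.length + (m + 1))]
    have hidx2 : L.length + (m + 1) - L.length = m + 1 := by omega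
    simp only [hidx2, List.getElem_cons_succ]
    exact hp

lemma isPath_node_iff {cs : List RTree} {i : ℕ} {p : List ℕ} :
    IsPath (i :: p) (.node cs) ↔ FIsPath cs (i :: p) := Iff.rfl



open RTree

lemma foldr_max_le_sum {cs : List RTree} (h : ∀ c ∈ cs, c.depth ≤ c.size) :
    (cs.map RTree.depth).foldr max 0 ≤ (cs.map RTree.size).sum := by
  induction cs with
  | nil => simp
  | cons c cs' ih2 =>
    simp only [List.map_cons, List.foldr_cons, List.sum_cons]
    have h1 : c.depth ≤ c.size := h c (by simp)
    have h2 := ih2 (fun c hc => h c (by simp [hc]))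
    exact max_le (by omega) (by omega)

lemma depth_le_size (t : RTree) : t.depth ≤ t.size := by
  induction t using my_ind with
  | _ cs ih =>
    rw [depth_node, size_node]
    have := foldr_max_le_sum ih
    omega

lemma chain_lemma {n d k : ℕ} (hd : 1 ≤ d) (hpack : PackStmt n d k) :
    ∀ (N : ℕ) (t : RTree), t.size ≤ N → 2 ^ k < t.size → t.size ≤ 2 ^ (k+1) →
      t.depth ≤ d → ∀ a ᾱ : ℕ, 1 ≤ a → xval d (k+1) ∣ ᾱ →
      (∀ q' : ℕ, 1 ≤ q' → q' + 1 ≤ t.depth →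
        max (a + xval d (k+1) - 1) (ᾱ + xval d (k+1)) +
          ⌊cseq k * ((t.size - q' : ℕ) : ℚ)⌋₊ + q' * xval d (k+1) ≤ 3 * n) →
      ∃ (cq α β : ℕ) (f : List ℕ → ℕ × ℕ × ℕ),
        1 ≤ cq ∧ cq + 1 ≤ t.depth ∧
        xval d (k+1) ∣ α ∧ xval d (k+1) ∣ β ∧
        a ≤ α ∧ ᾱ + xval d (k+1) ≤ α ∧ α + xval d (k+1) ≤ β ∧
        β ≤ max (a + xval d (k+1) - 1) (ᾱ + xval d (k+1)) +
          ⌊cseq k * ((t.size - cq : ℕ) : ℚ)⌋₊ + cq * xval d (k+1) ∧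
        f [] = (k+1, α / xval d (k+1), (β - α) / xval d (k+1)) ∧
        (∀ p, IsPath p t → tripInterval d (f p) ⊆ Set.Ico α β) ∧
        (∀ p, IsPath p t → (f p ∈ Uset n d k (Set.Ico α β) ∨
          ∃ h' j', f p = (k+1, h', j') ∧ 1 ≤ j' ∧ α ≤ xval d (k+1) * h' ∧
            xval d (k+1) * (h' + j') = β)) ∧
        (∀ p q, IsPath p t → IsPath q t → p <+: q → p ≠ q →
          tripInterval d (f q) ⊂ tripInterval d (f p)) ∧
        (∀ p q, IsPath p t → IsPath q t → ¬ p <+: q → ¬ q <+: p →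
          Disjoint (tripInterval d (f p)) (tripInterval d (f q))) := by
  intro N
  induction N with
  | zero =>
    intro t h0
    have := one_le_size t
    omega
  | succ N ihN =>
    intro t hszN hbig hsmall hdep a ᾱ ha hdvd h3n
    obtain ⟨cs⟩ := t
    set x := xval d (k+1) with hxdef
    have hx1 : 1 ≤ x := one_le_xval d (k+1) hd
    set M := max (a + x - 1) (ᾱ + x) with hMdef
    set α := max (ru a x) (ᾱ + x) with hαdef
    have hαM : α ≤ M := max_le (le_trans (ru_le a x hx1) (le_max_left _ _)) (le_max_right _ _)
    have ha_α : a ≤ α := le_trans (le_ru a x hx1) (le_max_left _ _)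
    have h1α : 1 ≤ α := le_trans ha ha_α
    have hdvdα : x ∣ α := by
      rcases max_choice (ru a x) (ᾱ + x) with h | h <;> rw [hαdef, h]
      · exact dvd_ru a x
      · exact Nat.dvd_add hdvd dvd_rfl
    have hᾱα : ᾱ + x ≤ α := le_max_right _ _
    have hcs_ne : cs ≠ [] := by
      intro h
      subst h
      rw [size_node] at hbig
      simp only [List.map_nil, List.sum_nil] at hbig
      have : 1 ≤ 2 ^ k := Nat.one_le_two_pow
      omega
    have hdep2 : 2 ≤ depth (.node cs) := two_le_depth_of_ne_nil hcs_ne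
    have hsz_cs : sizeF cs = size (.node cs) - 1 := by
      rw [size_node]; simp [sizeF]
    by_cases hbigc : ∃ c ∈ cs, 2 ^ k < c.size
    · -- there is a (unique) big child
      obtain ⟨b, hbmem, hb⟩ := hbigc
      obtain ⟨L, R, rfl⟩ := List.append_of_mem hbmem
      have hsz_dec : size (.node (L ++ b :: R)) = 1 + sizeF L + b.size + sizeF R :=
        size_node_append L R b
      have hsmall_side : ∀ c ∈ L ++ R, c.size ≤ 2 ^ k := by
        intro c hc
        by_contra hcbig
        push_neg at hcbig
        have hcsz : b.size + c.size ≤ sizeF L + b.size + sizeF R := by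
          rcases List.mem_append.mp hc with h | h
          · have : c.size ≤ sizeF L := by
              simpa [sizeF] using List.le_sum_of_mem (List.mem_map_of_mem (f := size) h)
            omega
          · have : c.size ≤ sizeF R := by
              simpa [sizeF] using List.le_sum_of_mem (List.mem_map_of_mem (f := size) h)
            omega
        have : 2 ^ (k+1) = 2 ^ k + 2 ^ k := by ring
        omega
      have hdepc : ∀ c ∈ L ++ b :: R, c.depth ≤ d := by
        intro c hc
        have := depth_le_of_mem hc
        omega
      set WL := ⌊cseq k * (sizeF L : ℚ)⌋₊ with hWLdef
      set WR := ⌊cseq k * (sizeF R : ℚ)⌋₊ with hWRdef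
      -- bound used repeatedly : WL + WR + floor(c_k (b.size - m)) ≤ floor (c_k (size t - 1 - m))
      have hsup : ∀ m : ℕ, m ≤ b.size →
          WL + WR + ⌊cseq k * ((b.size - m : ℕ) : ℚ)⌋₊ ≤
          ⌊cseq k * ((size (.node (L ++ b :: R)) - 1 - m : ℕ) : ℚ)⌋₊ := by
        intro m hm
        have h1 : WL + WR ≤ ⌊cseq k * ((sizeF L + sizeF R : ℕ) : ℚ)⌋₊ :=
          floor_superadd _ (cseq_nonneg k) _ _
        have h2 : ⌊cseq k * ((sizeF L + sizeF R : ℕ) : ℚ)⌋₊ + ⌊cseq k * ((b.size - m : ℕ) : ℚ)⌋₊ ≤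
            ⌊cseq k * ((sizeF L + sizeF R + (b.size - m) : ℕ) : ℚ)⌋₊ :=
          floor_superadd _ (cseq_nonneg k) _ _
        have h3 : sizeF L + sizeF R + (b.size - m) = size (.node (L ++ b :: R)) - 1 - m := by
          rw [hsz_dec]; omega
        rw [h3] at h2
        omega
      have hdepb : b.depth + 1 ≤ depth (.node (L ++ b :: R)) :=
        depth_le_of_mem (by simp)
      have h3n_pack : α + WL + WR ≤ 3 * n := by
        have h1 := h3n 1 le_rfl hdep2
        have h2 := hsup 1 (by have := one_le_size b; omega)
        have h3 : ⌊cseq k * ((b.size - 1 : ℕ) : ℚ)⌋₊ ≥ 0 := Nat.zero_le _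
        have h4 : WL + WR ≤ ⌊cseq k * ((size (.node (L ++ b :: R)) - 1 - 1 : ℕ) : ℚ)⌋₊ := by omega
        have h5 : ⌊cseq k * ((size (.node (L ++ b :: R)) - 1 - 1 : ℕ) : ℚ)⌋₊ ≤
            ⌊cseq k * ((size (.node (L ++ b :: R)) - 1 : ℕ) : ℚ)⌋₊ :=
          floor_cseq_mono k (by omega)
        omega
      -- pack L and R
      obtain ⟨fL, sL⟩ := hpack L
        (fun c hc => ⟨hsmall_side c (by simp [hc]), hdepc c (by simp [hc])⟩)
        α h1α (by omega)
      obtain ⟨fR, sR⟩ := hpack R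
        (fun c hc => ⟨hsmall_side c (by simp [hc]), hdepc c (by simp [hc])⟩)
        (α + WL) (by omega) (by omega)
      -- recurse into b
      have hszbN : b.size ≤ N := by
        have : b.size + 1 ≤ size (.node (L ++ b :: R)) := by rw [hsz_dec]; omega
        omega
      have h3nb : ∀ q' : ℕ, 1 ≤ q' → q' + 1 ≤ b.depth →
          max (α + WL + WR + x - 1) (α + x) +
            ⌊cseq k * ((b.size - q' : ℕ) : ℚ)⌋₊ + q' * x ≤ 3 * n := by
        intro q' hq1 hq2
        have hq'b : q' ≤ b.size := le_trans (by omega) (depth_le_size b)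
        calc max (α + WL + WR + x - 1) (α + x) + ⌊cseq k * ((b.size - q' : ℕ) : ℚ)⌋₊ + q' * x
            ≤ (α + WL + WR + x) + ⌊cseq k * ((b.size - q' : ℕ) : ℚ)⌋₊ + q' * x := by
              have hmax : max (α + WL + WR + x - 1) (α + x) ≤ α + WL + WR + x :=
                max_le (by omega) (by omega)
              omega
          _ ≤ M + ⌊cseq k * ((size (.node (L ++ b :: R)) - (q' + 1) : ℕ) : ℚ)⌋₊ + (q' + 1) * x := by
              have hs := hsup q' hq'b
              have e1 : size (.node (L ++ b :: R)) - 1 - q' = size (.node (L ++ b :: R)) - (q' + 1) := by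
                omega
              rw [e1] at hs
              rw [Nat.succ_mul]
              omega
          _ ≤ 3 * n := h3n (q' + 1) (by omega) (by omega)
      obtain ⟨qb, αb, βb, fb, hqb1, hqb2, hdvdαb, hdvdβb, hαb1, hαb2, hαb3, hβb, hfb0,
        hfbsub, hfbmem, hfbnest, hfbdisj⟩ :=
        ihN b hszbN hb (by omega) (by omega) (α + WL + WR) α (by omega) hdvdα h3nb
      refine ⟨qb + 1, α, βb, fun p => match p with
        | [] => (k+1, α / x, (βb - α) / x)
        | i :: p' =>
          if i < L.length then fL (i :: p')
          else if i = L.length then fb p'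
          else fR ((i - L.length - 1) :: p'), ?_, ?_, ?_, ?_, ?_, ?_, ?_, ?_, ?_, ?_, ?_, ?_, ?_⟩
      · omega
      · omega
      · exact hdvdα
      · exact hdvdβb
      · exact ha_α
      · exact hᾱα
      · -- α + x ≤ βb
        have : α + x ≤ αb := hαb2
        omega
      · -- budget
        have hds : b.depth ≤ b.size := depth_le_size b
        have hqbb : qb ≤ b.size := by omega
        calc βb ≤ max (α + WL + WR + x - 1) (α + x) +
              ⌊cseq k * ((b.size - qb : ℕ) : ℚ)⌋₊ + qb * x := hβb
          _ ≤ (α + WL + WR + x) + ⌊cseq k * ((b.size - qb : ℕ) : ℚ)⌋₊ + qb * x := by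
              have hmax : max (α + WL + WR + x - 1) (α + x) ≤ α + WL + WR + x :=
                max_le (by omega) (by omega)
              omega
          _ ≤ M + ⌊cseq k * ((size (.node (L ++ b :: R)) - (qb + 1) : ℕ) : ℚ)⌋₊ + (qb + 1) * x := by
              have hs := hsup qb hqbb
              have e1 : size (.node (L ++ b :: R)) - 1 - qb = size (.node (L ++ b :: R)) - (qb + 1) := by
                omega
              rw [e1] at hs
              rw [Nat.succ_mul]
              omega
      · rfl
      · -- h6 : all trips inside [α, βb)
        intro p hp
        match p with
        | [] =>
          rw [trip_chain_eq d k α βb hd hdvdα hdvdβb (by omega)]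
        | i :: p' =>
          by_cases hiL : i < L.length
          · simp only [if_pos hiL]
            have hpL := (path_trans_left hiL).mp hp
            have := trip_subset_of_mem (sL.mem _ hpL)
            intro y hy
            have := this hy
            simp only [Set.mem_Ico] at *
            omega
          · by_cases hiM : i = L.length
            · simp only [if_neg hiL, if_pos hiM]
              subst hiM
              have hpb := path_trans_mid.mp hp
              have := hfbsub p' hpb
              intro y hy
              have := this hy
              simp only [Set.mem_Ico] at *
              omega
            · simp only [if_neg hiL, if_neg hiM]
              have hpR := (path_trans_right (by omega)).mp hp
              have := trip_subset_of_mem (sR.mem _ hpR)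
              intro y hy
              have := this hy
              simp only [Set.mem_Ico] at *
              omega
      · -- h7 : Uset or chain form
        intro p hp
        match p with
        | [] =>
          right
          refine ⟨α / x, (βb - α) / x, rfl, ?_, ?_, ?_⟩
          · rw [Nat.one_le_div_iff (by omega)]
            omega
          · rw [Nat.mul_div_cancel' hdvdα]
          · have hsub : x ∣ βb - α := Nat.dvd_sub hdvdβb hdvdα
            rw [Nat.mul_add, Nat.mul_div_cancel' hdvdα, Nat.mul_div_cancel' hsub]
            omega
        | i :: p' =>
          by_cases hiL : i < L.length
          · left
            simp only [if_pos hiL]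
            refine Uset_mono le_rfl ?_ (sL.mem _ ((path_trans_left hiL).mp hp))
            apply Set.Ico_subset_Ico le_rfl
            omega
          · by_cases hiM : i = L.length
            · simp only [if_neg hiL, if_pos hiM]
              subst hiM
              rcases hfbmem p' (path_trans_mid.mp hp) with h | ⟨h', j', he, hj, hα', hβ'⟩
              · left
                refine Uset_mono le_rfl ?_ h
                apply Set.Ico_subset_Ico (by omega) le_rfl
              · right
                exact ⟨h', j', he, hj, by omega, hβ'⟩
            · left
              simp only [if_neg hiL, if_neg hiM]
              refine Uset_mono le_rfl ?_ (sR.mem _ ((path_trans_right (by omega)).mp hp))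
              apply Set.Ico_subset_Ico (by omega)
              omega
      · -- nest
        intro p q hp hq hpre hne
        match p, q with
        | [], [] => exact absurd rfl hne
        | i :: p', q =>
          -- a cons path is never a strict prefix of [] ; and if q = [] prefix fails
          match q with
          | [] => exact absurd (List.eq_nil_of_prefix_nil hpre) (by simp)
          | j :: q' =>
            have hij : i = j := (List.cons_prefix_cons.mp hpre).1
            subst hij
            have hpre' : p' <+: q' := (List.cons_prefix_cons.mp hpre).2
            have hne' : p' ≠ q' := fun h => hne (by rw [h])
            by_cases hiL : i < L.length
            · simp only [if_pos hiL]
              exact sL.nest (i :: p') (i :: q') ((path_trans_left hiL).mp hp)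
                ((path_trans_left hiL).mp hq)
                (List.cons_prefix_cons.mpr ⟨rfl, hpre'⟩)
                (fun h => hne (by injection h with h1 h2; rw [h2]))
            · by_cases hiM : i = L.length
              · simp only [if_neg hiL, if_pos hiM]
                subst hiM
                exact hfbnest p' q' (path_trans_mid.mp hp) (path_trans_mid.mp hq) hpre' hne'
              · simp only [if_neg hiL, if_neg hiM]
                exact sR.nest ((i - L.length - 1) :: p') ((i - L.length - 1) :: q')
                  ((path_trans_right (by omega)).mp hp)
                  ((path_trans_right (by omega)).mp hq)
                  (List.cons_prefix_cons.mpr ⟨rfl, hpre'⟩)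
                  (fun h => hne (by injection h with h1 h2; rw [h2]))
        | [], j :: q' =>
          -- root strictly contains everything else
          rw [trip_chain_eq d k α βb hd hdvdα hdvdβb (by omega)]
          have hq' := hq
          by_cases hjL : j < L.length
          · simp only [if_pos hjL]
            have hsub : tripInterval d (fL (j :: q')) ⊆ Set.Ico α (α + WL) :=
              trip_subset_of_mem (sL.mem _ ((path_trans_left hjL).mp hq))
            constructor
            · intro y hy
              have := hsub hy
              simp only [Set.mem_Ico] at *
              omega
            · intro hcon
              have h1 : βb - 1 ∈ Set.Ico α βb := by simp only [Set.mem_Ico]; omega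
              have h2 := hsub (hcon h1)
              simp only [Set.mem_Ico] at h2
              omega
          · by_cases hjM : j = L.length
            · simp only [if_neg hjL, if_pos hjM]
              subst hjM
              have hsub : tripInterval d (fb q') ⊆ Set.Ico αb βb :=
                hfbsub q' (path_trans_mid.mp hq)
              constructor
              · intro y hy
                have := hsub hy
                simp only [Set.mem_Ico] at *
                omega
              · intro hcon
                have h1 : α ∈ Set.Ico α βb := by simp only [Set.mem_Ico]; omega
                have h2 := hsub (hcon h1)
                simp only [Set.mem_Ico] at h2
                omega
            · simp only [if_neg hjL, if_neg hjM]
              have hsub : tripInterval d (fR ((j - L.length - 1) :: q')) ⊆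
                  Set.Ico (α + WL) (α + WL + WR) :=
                trip_subset_of_mem (sR.mem _ ((path_trans_right (by omega)).mp hq))
              constructor
              · intro y hy
                have := hsub hy
                simp only [Set.mem_Ico] at *
                omega
              · intro hcon
                have h1 : βb - 1 ∈ Set.Ico α βb := by simp only [Set.mem_Ico]; omega
                have h2 := hsub (hcon h1)
                simp only [Set.mem_Ico] at h2
                omega
      · -- disj
        intro p q hp hq hpre hqre
        match p, q with
        | [], q => exact absurd (List.nil_prefix) hpre
        | p, [] => exact absurd (List.nil_prefix) hqre
        | i :: p', j :: q' =>
          have winL : ∀ (m : ℕ) (r : List ℕ), m < L.length → IsPath (m :: r) (.node (L ++ b :: R)) →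
              tripInterval d (fL (m :: r)) ⊆ Set.Ico α (α + WL) :=
            fun m r hm hmp => trip_subset_of_mem (sL.mem _ ((path_trans_left hm).mp hmp))
          have winR : ∀ (m : ℕ) (r : List ℕ), L.length < m → IsPath (m :: r) (.node (L ++ b :: R)) →
              tripInterval d (fR ((m - L.length - 1) :: r)) ⊆ Set.Ico (α + WL) (α + WL + WR) :=
            fun m r hm hmp => trip_subset_of_mem (sR.mem _ ((path_trans_right hm).mp hmp))
          by_cases hiL : i < L.length <;> by_cases hjL : j < L.length
          · -- both in L
            simp only [if_pos hiL, if_pos hjL]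
            exact sL.disj (i :: p') (j :: q') ((path_trans_left hiL).mp hp)
              ((path_trans_left hjL).mp hq) hpre hqre
          · -- i in L, j in b or R
            simp only [if_pos hiL, if_neg hjL]
            by_cases hjM : j = L.length
            · simp only [if_pos hjM]
              subst hjM
              refine Set.disjoint_of_subset (winL i p' hiL hp) (hfbsub q' (path_trans_mid.mp hq)) ?_
              exact Ico_disjoint (by omega)
            · simp only [if_neg hjM]
              refine Set.disjoint_of_subset (winL i p' hiL hp) (winR j q' (by omega) hq) ?_
              exact Ico_disjoint (by omega)
          · -- j in L, i in b or R
            simp only [if_neg hiL, if_pos hjL]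
            by_cases hiM : i = L.length
            · simp only [if_pos hiM]
              subst hiM
              refine Set.disjoint_of_subset (hfbsub p' (path_trans_mid.mp hp)) (winL j q' hjL hq) ?_
              exact (Ico_disjoint (by omega)).symm
            · simp only [if_neg hiM]
              refine Set.disjoint_of_subset (winR i p' (by omega) hp) (winL j q' hjL hq) ?_
              exact (Ico_disjoint (by omega)).symm
          · -- neither in L
            simp only [if_neg hiL, if_neg hjL]
            by_cases hiM : i = L.length <;> by_cases hjM : j = L.length
            · -- both in b
              simp only [if_pos hiM, if_pos hjM]
              subst hiM; subst hjM
              refine hfbdisj p' q' (path_trans_mid.mp hp) (path_trans_mid.mp hq) ?_ ?_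
              · exact fun h => hpre (List.cons_prefix_cons.mpr ⟨rfl, h⟩)
              · exact fun h => hqre (List.cons_prefix_cons.mpr ⟨rfl, h⟩)
            · -- i in b, j in R
              simp only [if_pos hiM, if_neg hjM]
              subst hiM
              refine Set.disjoint_of_subset (hfbsub p' (path_trans_mid.mp hp))
                (winR j q' (by omega) hq) ?_
              exact (Ico_disjoint (by omega)).symm
            · -- i in R, j in b
              simp only [if_neg hiM, if_pos hjM]
              subst hjM
              refine Set.disjoint_of_subset (winR i p' (by omega) hp)
                (hfbsub q' (path_trans_mid.mp hq)) ?_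
              exact Ico_disjoint (by omega)
            · -- both in R
              simp only [if_neg hiM, if_neg hjM]
              refine sR.disj ((i - L.length - 1) :: p') ((j - L.length - 1) :: q')
                ((path_trans_right (by omega)).mp hp) ((path_trans_right (by omega)).mp hq) ?_ ?_
              · intro h
                rw [List.cons_prefix_cons] at h
                exact hpre (List.cons_prefix_cons.mpr ⟨by omega, h.2⟩)
              · intro h
                rw [List.cons_prefix_cons] at h
                exact hqre (List.cons_prefix_cons.mpr ⟨by omega, h.2⟩)
    · -- no big child
      push_neg at hbigc
      set W := ⌊cseq k * (sizeF cs : ℚ)⌋₊ with hWdef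
      have hW1 : W = ⌊cseq k * ((size (.node cs) - 1 : ℕ) : ℚ)⌋₊ := by rw [hWdef, hsz_cs]
      have h3n1 := h3n 1 le_rfl hdep2
      have hαW : α + W ≤ 3 * n := by
        rw [hW1]
        omega
      obtain ⟨fcs, scs⟩ := hpack cs
        (fun c hc => ⟨by have := hbigc c hc; omega,
          by have := depth_le_of_mem hc; omega⟩)
        α h1α hαW
      set β := max (ru (α + W + 1) x) (α + x) with hβdef
      have hdvdβ : x ∣ β := by
        rcases max_choice (ru (α + W + 1) x) (α + x) with h | h <;> rw [hβdef, h]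
        · exact dvd_ru _ x
        · exact Nat.dvd_add hdvdα dvd_rfl
      have hβ1 : α + W + 1 ≤ β := le_trans (le_ru _ x hx1) (le_max_left _ _)
      have hβ2 : β ≤ α + W + x := by
        apply max_le
        · have := ru_le (α + W + 1) x hx1
          omega
        · omega
      have hαβ : α + x ≤ β := le_max_right _ _
      refine ⟨1, α, β, fun p => match p with
        | [] => (k+1, α / x, (β - α) / x)
        | i :: p' => fcs (i :: p'), ?_, ?_, ?_, ?_, ?_, ?_, ?_, ?_, ?_, ?_, ?_, ?_, ?_⟩
      · exact le_refl 1
      · omega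
      · exact hdvdα
      · exact hdvdβ
      · exact ha_α
      · exact hᾱα
      · exact hαβ
      · rw [hW1] at hβ2
        have : 1 * x = x := by ring
        omega
      · rfl
      · intro p hp
        match p with
        | [] => rw [trip_chain_eq d k α β hd hdvdα hdvdβ (by omega)]
        | i :: p' =>
          have hsub : tripInterval d (fcs (i :: p')) ⊆ Set.Ico α (α + W) :=
            trip_subset_of_mem (scs.mem _ hp)
          intro y hy
          have := hsub hy
          simp only [Set.mem_Ico] at *
          omega
      · intro p hp
        match p with
        | [] =>
          right
          refine ⟨α / x, (β - α) / x, rfl, ?_, ?_, ?_⟩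
          · rw [Nat.one_le_div_iff (by omega)]
            omega
          · rw [Nat.mul_div_cancel' hdvdα]
          · have hsub : x ∣ β - α := Nat.dvd_sub hdvdβ hdvdα
            rw [Nat.mul_add, Nat.mul_div_cancel' hdvdα, Nat.mul_div_cancel' hsub]
            omega
        | i :: p' =>
          left
          refine Uset_mono le_rfl ?_ (scs.mem _ hp)
          apply Set.Ico_subset_Ico le_rfl
          omega
      · intro p q hp hq hpre hne
        match p, q with
        | [], [] => exact absurd rfl hne
        | i :: p', q =>
          match q with
          | [] => exact absurd (List.eq_nil_of_prefix_nil hpre) (by simp)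
          | j :: q' => exact scs.nest (i :: p') (j :: q') hp hq hpre hne
        | [], j :: q' =>
          rw [trip_chain_eq d k α β hd hdvdα hdvdβ (by omega)]
          have hsub : tripInterval d (fcs (j :: q')) ⊆ Set.Ico α (α + W) :=
            trip_subset_of_mem (scs.mem _ hq)
          constructor
          · intro y hy
            have := hsub hy
            simp only [Set.mem_Ico] at *
            omega
          · intro hcon
            have h1 : β - 1 ∈ Set.Ico α β := by simp only [Set.mem_Ico]; omega
            have h2 := hsub (hcon h1)
            simp only [Set.mem_Ico] at h2
            omega
      · intro p q hp hq hpre hqre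
        match p, q with
        | [], q => exact absurd (List.nil_prefix) hpre
        | p, [] => exact absurd (List.nil_prefix) hqre
        | i :: p', j :: q' => exact scs.disj (i :: p') (j :: q') hp hq hpre hqre



open RTree

lemma tree_stmt (n d : ℕ) (hd : 1 ≤ d) : ∀ k, TreeStmt n d k := by
  intro k
  induction k with
  | zero =>
    intro t hsz hdep a ha h3n
    have h1 := one_le_size t
    have hsz1 : t.size = 1 := by
      simp only [pow_zero] at hsz
      omega
    obtain ⟨cs⟩ := t
    have hcs : cs = [] := by
      cases cs with
      | nil => rfl
      | cons c cs' =>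
        rw [size_node] at hsz1
        simp only [List.map_cons, List.sum_cons] at hsz1
        have := one_le_size c
        omega
    subst hcs
    have hpaths : ∀ p : List ℕ, IsPath p (.node ([] : List RTree)) → p = [] := by
      intro p hp
      cases p with
      | nil => rfl
      | cons i p' =>
        obtain ⟨h, _⟩ := hp
        simp at h
    have hwin : 1 ≤ ⌊cseq 0 * ((RTree.node ([] : List RTree)).size : ℚ)⌋₊ := by
      rw [hsz1]
      have : cseq 0 * ((1 : ℕ) : ℚ) = 1 := by norm_num [cseq]
      rw [this]
      simp
    refine ⟨fun _ => (0, a, 0), ?_, ?_, ?_⟩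
    · intro p hp
      left
      refine ⟨rfl, rfl, ?_⟩
      simp only [Set.mem_Ico]
      omega
    · intro p q hp hq hpre hne
      rw [hpaths p hp, hpaths q hq] at hne
      exact absurd rfl hne
    · intro p q hp hq hpre hqre
      rw [hpaths p hp] at hpre
      exact absurd (List.nil_prefix) hpre
  | succ k ih =>
    intro t hsz hdep a ha h3n
    by_cases hsmall : t.size ≤ 2 ^ k
    · have hmono : ⌊cseq k * (t.size : ℚ)⌋₊ ≤ ⌊cseq (k+1) * (t.size : ℚ)⌋₊ :=
        floor_mono_mul (cseq_mono (Nat.le_succ k)) (cseq_nonneg k) t.size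
      obtain ⟨f, s⟩ := ih t hsmall hdep a ha (by omega)
      refine ⟨f, ?_, s.nest, s.disj⟩
      intro p hp
      exact Uset_mono (Nat.le_succ k) (Set.Ico_subset_Ico le_rfl (by omega)) (s.mem p hp)
    · push_neg at hsmall
      have hx1 : 1 ≤ (xval d (k+1)) := one_le_xval d (k+1) hd
      have hpk : PackStmt n d k := pack_of_tree ih
      have hM : max (a + (xval d (k+1)) - 1) (0 + (xval d (k+1))) = a + (xval d (k+1)) - 1 := by
        apply max_eq_left
        omega
      have hdepsz := depth_le_size t
      have h3nc : ∀ q' : ℕ, 1 ≤ q' → q' + 1 ≤ t.depth →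
          max (a + (xval d (k+1)) - 1) (0 + (xval d (k+1))) + ⌊cseq k * ((t.size - q' : ℕ) : ℚ)⌋₊ + q' * (xval d (k+1)) ≤ 3 * n := by
        intro q' hq1 hq2
        rw [hM]
        have hq'd : q' + 1 ≤ d := le_trans hq2 hdep
        have hbud := chain_budget d k q' t.size hd hq1 hq'd hsmall (by omega)
        rw [Nat.succ_mul] at hbud
        omega
      obtain ⟨cq, α, β, f, h1, h2, hdα, hdβ, haα, hᾱα, hαβ, hβbound, hf0, hsub, hmem,
        hnest, hdisj⟩ :=
        chain_lemma hd hpk t.size t le_rfl hsmall hsz hdep a 0 ha (dvd_zero (xval d (k+1))) h3nc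
      have hβle : β + 1 ≤ a + ⌊cseq (k+1) * (t.size : ℚ)⌋₊ := by
        have hq'd : cq + 1 ≤ d := le_trans h2 hdep
        have hbud := chain_budget d k cq t.size hd h1 hq'd hsmall (by omega)
        rw [hM] at hβbound
        rw [Nat.succ_mul] at hbud
        omega
      refine ⟨f, ?_, hnest, hdisj⟩
      intro p hp
      rcases hmem p hp with h | ⟨h', j', he, hj, hα', hβ'⟩
      · exact Uset_mono (Nat.le_succ k) (Set.Ico_subset_Ico haα (by omega)) h
      · right
        rw [he]
        have hxh : (xval d (k+1)) * h' + (xval d (k+1)) ≤ β := by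
          have : (xval d (k+1)) * (h' + j') = (xval d (k+1)) * h' + (xval d (k+1)) * j' := by ring
          rw [this] at hβ'
          have : (xval d (k+1)) ≤ (xval d (k+1)) * j' := by nlinarith
          omega
        refine ⟨by omega, le_rfl, ?_, hj, ?_, ?_⟩
        · -- H bound
          apply hval_bound n d k h' hd
          omega
        · -- J bound
          apply jval_bound n d k j' t.size hd hsz
          have : (xval d (k+1)) * j' ≤ β - α := by
            have he2 : (xval d (k+1)) * (h' + j') = (xval d (k+1)) * h' + (xval d (k+1)) * j' := by ring
            rw [he2] at hβ'
            omega
          omega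
        · -- interval inside window
          have htrip : tripInterval d (k+1, h', j') = Set.Ico ((xval d (k+1)) * h') ((xval d (k+1)) * (h' + j')) := by
            rw [tripInterval]
            rw [if_neg (by simp)]
          rw [htrip, hβ']
          intro y hy
          simp only [Set.mem_Ico] at *
          omega



open RTree

mutual
  def pathsList : RTree → List (List ℕ)
    | .node cs => [] :: pathsListF cs 0
  def pathsListF : List RTree → ℕ → List (List ℕ)
    | [], _ => []
    | t :: ts, i => (pathsList t).map (fun p => i :: p) ++ pathsListF ts (i+1)
end

lemma pathsListF_length (ts : List RTree) :
    (∀ t ∈ ts, (pathsList t).length = t.size) →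
    ∀ i : ℕ, (pathsListF ts i).length = sizeF ts := by
  induction ts with
  | nil => intro _ i; rw [pathsListF]; simp [sizeF]
  | cons t ts ih =>
    intro h i
    rw [pathsListF, sizeF_cons]
    simp only [List.length_append, List.length_map]
    rw [h t (by simp), ih (fun u hu => h u (by simp [hu])) (i+1)]

lemma pathsList_length (t : RTree) : (pathsList t).length = t.size := by
  induction t using my_ind with
  | _ cs ih =>
    rw [pathsList, size_node]
    simp only [List.length_cons]
    rw [pathsListF_length cs ih 0]
    simp [sizeF]
    omega

lemma pathsListF_mem (ts : List RTree) :
    (∀ t ∈ ts, ∀ p, p ∈ pathsList t ↔ IsPath p t) →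
    ∀ (i : ℕ) (p : List ℕ),
      p ∈ pathsListF ts i ↔ ∃ (j : ℕ) (q : List ℕ), p = (i + j) :: q ∧ FIsPath ts (j :: q) := by
  induction ts with
  | nil =>
    intro _ i p
    rw [pathsListF]
    simp only [List.not_mem_nil, false_iff, not_exists]
    rintro j q ⟨_, hf⟩
    exact not_FIsPath_nil _ hf
  | cons t ts ih =>
    intro h i p
    rw [pathsListF]
    simp only [List.mem_append, List.mem_map]
    constructor
    · rintro (⟨q, hq, rfl⟩ | hp)
      · exact ⟨0, q, by simp, by
          rw [FIsPath_cons_zero]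
          exact (h t (by simp) q).mp hq⟩
      · obtain ⟨j, q, rfl, hf⟩ := (ih (fun u hu => h u (by simp [hu])) (i+1) p).mp hp
        exact ⟨j + 1, q, by ring_nf, by rw [FIsPath_cons_succ]; exact hf⟩
    · rintro ⟨j, q, rfl, hf⟩
      cases j with
      | zero =>
        left
        rw [FIsPath_cons_zero] at hf
        exact ⟨q, (h t (by simp) q).mpr hf, by simp⟩
      | succ j =>
        right
        rw [FIsPath_cons_succ] at hf
        rw [(ih (fun u hu => h u (by simp [hu])) (i+1) ((i + (j+1)) :: q))]
        exact ⟨j, q, by ring_nf, hf⟩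

lemma pathsList_mem (t : RTree) : ∀ p, p ∈ pathsList t ↔ IsPath p t := by
  induction t using my_ind with
  | _ cs ih =>
    intro p
    rw [pathsList]
    simp only [List.mem_cons]
    constructor
    · rintro (rfl | hp)
      · exact isPath_nil _
      · obtain ⟨j, q, rfl, hf⟩ :=
          (pathsListF_mem cs (fun u hu p' => ih u hu p') 0 p).mp hp
        simp only [Nat.zero_add]
        exact hf
    · intro hp
      cases p with
      | nil => exact Or.inl rfl
      | cons j q =>
        right
        rw [pathsListF_mem cs (fun u hu p' => ih u hu p') 0 ((j : ℕ) :: q)]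
        exact ⟨j, q, by simp, hp⟩

lemma pathsListF_nodup (ts : List RTree) :
    (∀ t ∈ ts, (pathsList t).Nodup) → ∀ i : ℕ, (pathsListF ts i).Nodup := by
  induction ts with
  | nil => intro _ i; rw [pathsListF]; exact List.nodup_nil
  | cons t ts ih =>
    intro h i
    rw [pathsListF]
    apply List.Nodup.append
    · exact (h t (by simp)).map (fun p q hpq => by injection hpq)
    · exact ih (fun u hu => h u (by simp [hu])) (i+1)
    · intro p hp hq
      obtain ⟨q, hq', rfl⟩ := List.mem_map.mp hp
      have h2 : ∀ t' ∈ ts, ∀ p', p' ∈ pathsList t' ↔ IsPath p' t' := by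
        intro t' ht' p'
        exact pathsList_mem t' p'
      obtain ⟨j, q2, heq, _⟩ := (pathsListF_mem ts h2 (i+1) _).mp hq
      injection heq with h1 _
      omega

lemma pathsList_nodup (t : RTree) : (pathsList t).Nodup := by
  induction t using my_ind with
  | _ cs ih =>
    rw [pathsList]
    apply List.Nodup.cons
    · intro hmem
      obtain ⟨j, q, heq, _⟩ := (pathsListF_mem cs (fun u hu p' => pathsList_mem u p') 0 []).mp hmem
      simp at heq
    · exact pathsListF_nodup cs ih 0



open RTree

attribute [local instance] Classical.propDecidable

noncomputable section

variable {V : Type} [Fintype V]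

def children (F : RootedForest V) (o : Option V) : List V :=
  Finset.univ.toList.filter (fun v => F.parent v = o)

lemma mem_children {F : RootedForest V} {o : Option V} {v : V} :
    v ∈ children F o ↔ F.parent v = o := by
  simp [children, List.mem_filter, Finset.mem_toList]

lemma nodup_children (F : RootedForest V) (o : Option V) : (children F o).Nodup :=
  (Finset.nodup_toList _).filter _

lemma depth_pos (F : RootedForest V) (v : V) : 1 ≤ F.depth v := by
  cases h : F.parent v with
  | none => rw [F.depth_root v h]
  | some u => rw [F.depth_parent v u h]; omega

def build (F : RootedForest V) (d : ℕ) (hdd : ∀ v, F.depth v ≤ d) (v : V) : RTree :=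
  .node ((children F (some v)).attach.map (fun w => build F d hdd w.1))
termination_by d + 1 - F.depth v
decreasing_by
  have hw : w.1 ∈ children F (some v) := w.2
  have hp : F.parent w.1 = some v := mem_children.mp hw
  have h1 : F.depth w.1 = F.depth v + 1 := F.depth_parent _ _ hp
  have h2 : F.depth w.1 ≤ d := hdd _
  omega

lemma build_eq (F : RootedForest V) (d : ℕ) (hdd : ∀ v, F.depth v ≤ d) (v : V) :
    build F d hdd v = .node ((children F (some v)).map (build F d hdd)) := by
  rw [build]
  congr 1
  exact List.attach_map_val

def pathOf (F : RootedForest V) (v : V) : List ℕ :=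
  match h : F.parent v with
  | none => [List.idxOf v (children F none)]
  | some u => pathOf F u ++ [List.idxOf v (children F (some u))]
termination_by F.depth v
decreasing_by
  have h1 : F.depth v = F.depth u + 1 := F.depth_parent _ _ h
  omega

lemma pathOf_root {F : RootedForest V} {v : V} (h : F.parent v = none) :
    pathOf F v = [List.idxOf v (children F none)] := by
  rw [pathOf]
  split
  · rfl
  · rename_i u heq
    rw [h] at heq
    simp at heq

lemma pathOf_parent {F : RootedForest V} {v u : V} (h : F.parent v = some u) :
    pathOf F v = pathOf F u ++ [List.idxOf v (children F (some u))] := by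
  rw [pathOf]
  split
  · rename_i heq
    rw [h] at heq
    simp at heq
  · rename_i u' heq
    rw [h] at heq
    injection heq with h2
    rw [h2]

def treeAt : RTree → List ℕ → Option RTree
  | t, [] => some t
  | .node cs, i :: p => if h : i < cs.length then treeAt cs[i] p else none

def forestAt (G : List RTree) : List ℕ → Option RTree
  | [] => none
  | i :: p => if h : i < G.length then treeAt G[i] p else none

lemma treeAt_append (p q : List ℕ) : ∀ t : RTree,
    treeAt t (p ++ q) = (treeAt t p).bind (fun s => treeAt s q) := by
  induction p with
  | nil => intro t; simp [treeAt]
  | cons i p' ih =>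
    intro t
    obtain ⟨cs⟩ := t
    rw [List.cons_append, treeAt]
    by_cases h : i < cs.length
    · rw [dif_pos h]
      rw [ih]
      conv_rhs => rw [treeAt]
      rw [dif_pos h]
    · rw [dif_neg h]
      conv_rhs => rw [treeAt]
      rw [dif_neg h]
      rfl

lemma forestAt_append (G : List RTree) (i : ℕ) (p q : List ℕ) :
    forestAt G ((i :: p) ++ q) = (forestAt G (i :: p)).bind (fun s => treeAt s q) := by
  rw [List.cons_append, forestAt, forestAt]
  by_cases h : i < G.length
  · rw [dif_pos h, dif_pos h, treeAt_append]
  · rw [dif_neg h, dif_neg h]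
    rfl

lemma isPath_of_treeAt : ∀ (p : List ℕ) (t s : RTree), treeAt t p = some s → IsPath p t := by
  intro p
  induction p with
  | nil => intro t s _; exact isPath_nil t
  | cons i p' ih =>
    intro t s h
    obtain ⟨cs⟩ := t
    rw [treeAt] at h
    by_cases hlt : i < cs.length
    · rw [dif_pos hlt] at h
      exact ⟨hlt, ih _ _ h⟩
    · rw [dif_neg hlt] at h
      simp at h

lemma FIsPath_of_forestAt {G : List RTree} {p : List ℕ} {s : RTree}
    (h : forestAt G p = some s) : FIsPath G p := by
  cases p with
  | nil => simp [forestAt] at h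
  | cons i p' =>
    rw [forestAt] at h
    by_cases hlt : i < G.length
    · rw [dif_pos hlt] at h
      exact ⟨hlt, isPath_of_treeAt _ _ _ h⟩
    · rw [dif_neg hlt] at h
      simp at h

variable {F : RootedForest V} {d : ℕ} (hdd : ∀ v, F.depth v ≤ d)

lemma pathOf_length : ∀ (m : ℕ) (v : V), F.depth v ≤ m → (pathOf F v).length = F.depth v := by
  intro m
  induction m with
  | zero => intro v hv; have := depth_pos F v; omega
  | succ m ih =>
    intro v hv
    cases h : F.parent v with
    | none => rw [pathOf_root h, F.depth_root v h]; rfl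
    | some u =>
      have hdu : F.depth v = F.depth u + 1 := F.depth_parent _ _ h
      rw [pathOf_parent h, List.length_append, ih u (by omega), hdu]
      rfl

lemma pathOf_ne_nil (v : V) : pathOf F v ≠ [] := by
  cases h : F.parent v with
  | none => rw [pathOf_root h]; simp
  | some u => rw [pathOf_parent h]; simp

lemma pathOf_inj : ∀ (m : ℕ) (v w : V), F.depth v ≤ m → pathOf F v = pathOf F w → v = w := by
  intro m
  induction m with
  | zero => intro v w hv; have := depth_pos F v; omega
  | succ m ih =>
    intro v w hv heq
    have hlen : F.depth v = F.depth w := by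
      have h1 := pathOf_length (F.depth v) v le_rfl
      have h2 := pathOf_length (F.depth w) w le_rfl
      rw [← h1, ← h2, heq]
    cases hv' : F.parent v with
    | none =>
      cases hw' : F.parent w with
      | some u =>
        have := F.depth_root v hv'
        have := F.depth_parent w u hw'
        have := depth_pos F u
        omega
      | none =>
        rw [pathOf_root hv', pathOf_root hw'] at heq
        injection heq with h1 _
        have hvm : v ∈ children F none := mem_children.mpr hv'
        have hwm : w ∈ children F none := mem_children.mpr hw'
        have hv1 : (children F none)[List.idxOf v (children F none)]'(List.idxOf_lt_length_iff.mpr hvm) = v :=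
          List.getElem_idxOf _
        have hw1 : (children F none)[List.idxOf w (children F none)]'(List.idxOf_lt_length_iff.mpr hwm) = w :=
          List.getElem_idxOf _
        rw [← hv1, ← hw1]
        congr 1
    | some u =>
      cases hw' : F.parent w with
      | none =>
        have := F.depth_root w hw'
        have := F.depth_parent v u hv'
        have := depth_pos F u
        omega
      | some u' =>
        rw [pathOf_parent hv', pathOf_parent hw'] at heq
        have hdu : F.depth v = F.depth u + 1 := F.depth_parent _ _ hv'
        have hdu' : F.depth w = F.depth u' + 1 := F.depth_parent _ _ hw'
        have hlen2 : (pathOf F u).length = (pathOf F u').length := by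
          rw [pathOf_length (F.depth u) u le_rfl, pathOf_length (F.depth u') u' le_rfl]
          omega
        obtain ⟨h1, h2⟩ := List.append_inj heq hlen2
        have huu : u = u' := ih u u' (by omega) h1
        subst huu
        injection h2 with h3 _
        have hvm : v ∈ children F (some u) := mem_children.mpr hv'
        have hwm : w ∈ children F (some u) := mem_children.mpr hw'
        have hv1 : (children F (some u))[List.idxOf v _]'(List.idxOf_lt_length_iff.mpr hvm) = v :=
          List.getElem_idxOf _
        have hw1 : (children F (some u))[List.idxOf w _]'(List.idxOf_lt_length_iff.mpr hwm) = w :=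
          List.getElem_idxOf _
        rw [← hv1, ← hw1]
        congr 1

end



open RTree

attribute [local instance] Classical.propDecidable

noncomputable section

variable {V : Type} [Fintype V] {F : RootedForest V} {d : ℕ}

lemma foldr_max_le {l : List ℕ} {m : ℕ} (h : ∀ y ∈ l, y ≤ m) : l.foldr max 0 ≤ m := by
  induction l with
  | nil => simp
  | cons a l ih =>
    simp only [List.foldr_cons]
    exact max_le (h a (by simp)) (ih (fun y hy => h y (by simp [hy])))

lemma build_depth (hdd : ∀ v, F.depth v ≤ d) :
    ∀ (m : ℕ) (v : V), d + 1 - F.depth v ≤ m → (build F d hdd v).depth + F.depth v ≤ d + 1 := by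
  intro m
  induction m with
  | zero => intro v hv; have := hdd v; omega
  | succ m ih =>
    intro v hv
    rw [build_eq, depth_node]
    have hch : ∀ y ∈ ((children F (some v)).map (build F d hdd)).map RTree.depth,
        y ≤ d - F.depth v := by
      intro y hy
      simp only [List.mem_map] at hy
      obtain ⟨s, ⟨c, hc, rfl⟩, rfl⟩ := hy
      have hp : F.parent c = some v := mem_children.mp hc
      have hdc : F.depth c = F.depth v + 1 := F.depth_parent _ _ hp
      have hcd : F.depth c ≤ d := hdd c
      have := ih c (by omega)
      omega
    have h2 := foldr_max_le hch
    have := depth_pos F v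
    have := hdd v
    omega

/-- the navigation invariant -/
lemma nav (hdd : ∀ v, F.depth v ≤ d) :
    ∀ (m : ℕ) (v : V), F.depth v ≤ m →
      forestAt ((children F none).map (build F d hdd)) (pathOf F v) = some (build F d hdd v) := by
  intro m
  induction m with
  | zero => intro v hv; have := depth_pos F v; omega
  | succ m ih =>
    intro v hv
    cases h : F.parent v with
    | none =>
      rw [pathOf_root h, forestAt]
      have hvm : v ∈ children F none := mem_children.mpr h
      have hlt : List.idxOf v (children F none) < (children F none).length :=
        List.idxOf_lt_length_iff.mpr hvm
      rw [dif_pos (by simpa using hlt)]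
      rw [treeAt]
      congr 1
      rw [List.getElem_map]
      congr 1
      exact List.getElem_idxOf hlt
    | some u =>
      have hdu : F.depth v = F.depth u + 1 := F.depth_parent _ _ h
      rw [pathOf_parent h]
      obtain ⟨i, p, hip⟩ : ∃ i p, pathOf F u = i :: p := by
        cases hpu : pathOf F u with
        | nil => exact absurd hpu (pathOf_ne_nil u)
        | cons i p => exact ⟨i, p, rfl⟩
      rw [hip]
      rw [forestAt_append]
      rw [← hip, ih u (by omega)]
      rw [Option.bind_some]
      conv_lhs => rw [build_eq]
      rw [treeAt]
      have hvm : v ∈ children F (some u) := mem_children.mpr h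
      have hlt : List.idxOf v (children F (some u)) < (children F (some u)).length :=
        List.idxOf_lt_length_iff.mpr hvm
      rw [dif_pos (by simpa using hlt)]
      rw [treeAt]
      congr 1
      rw [List.getElem_map]
      congr 1
      exact List.getElem_idxOf hlt

lemma encode (hdd : ∀ v, F.depth v ≤ d) (v : V) :
    FIsPath ((children F none).map (build F d hdd)) (pathOf F v) :=
  FIsPath_of_forestAt (nav hdd (F.depth v) v le_rfl)

lemma decode_tree (hdd : ∀ v, F.depth v ≤ d) :
    ∀ (p : List ℕ) (u : V), IsPath p (build F d hdd u) →
      ∃ w, pathOf F w = pathOf F u ++ p := by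
  intro p
  induction p with
  | nil => intro u _; exact ⟨u, by simp⟩
  | cons j p' ih =>
    intro u hp
    rw [build_eq] at hp
    obtain ⟨hlt, hp'⟩ := hp
    rw [List.getElem_map] at hp'
    have hlt' : j < (children F (some u)).length := by simpa using hlt
    set c := (children F (some u))[j] with hc
    have hcm : c ∈ children F (some u) := List.getElem_mem _
    have hpc : F.parent c = some u := mem_children.mp hcm
    have hpath : pathOf F c = pathOf F u ++ [j] := by
      rw [pathOf_parent hpc]
      congr 2
      exact List.Nodup.idxOf_getElem (nodup_children F (some u)) j hlt'
    obtain ⟨w, hw⟩ := ih c hp'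
    refine ⟨w, ?_⟩
    rw [hw, hpath, List.append_assoc]
    rfl

lemma decode (hdd : ∀ v, F.depth v ≤ d) (p : List ℕ)
    (hp : FIsPath ((children F none).map (build F d hdd)) p) :
    ∃ w, pathOf F w = p := by
  cases p with
  | nil => exact absurd hp (by simp [FIsPath])
  | cons i q =>
    obtain ⟨hlt, hq⟩ := hp
    rw [List.getElem_map] at hq
    have hlt' : i < (children F none).length := by simpa using hlt
    set r := (children F none)[i] with hr
    have hrm : r ∈ children F none := List.getElem_mem _
    have hpr : F.parent r = none := mem_children.mp hrm
    have hpath : pathOf F r = [i] := by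
      rw [pathOf_root hpr]
      congr 1
      exact List.Nodup.idxOf_getElem (nodup_children F none) i hlt'
    obtain ⟨w, hw⟩ := decode_tree hdd q r hq
    exact ⟨w, by rw [hw, hpath]; rfl⟩

lemma anc_prefix {u v : V} (h : F.Ancestor u v) :
    pathOf F u <+: pathOf F v ∧ (pathOf F u).length < (pathOf F v).length := by
  induction h with
  | single h =>
    rw [pathOf_parent h]
    exact ⟨List.prefix_append _ _, by simp⟩
  | tail h1 h2 ih =>
    rename_i b c
    have hpb : pathOf F b = pathOf F c ++ [List.idxOf b (children F (some c))] :=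
      pathOf_parent h2
    obtain ⟨hpre, hlen⟩ := ih
    constructor
    · refine List.IsPrefix.trans ?_ hpre
      rw [hpb]
      exact List.prefix_append _ _
    · rw [hpb] at hlen
      simp at hlen
      omega

lemma prefix_anc : ∀ (m : ℕ) (v u : V), F.depth v ≤ m →
    pathOf F u <+: pathOf F v → u ≠ v → F.Ancestor u v := by
  intro m
  induction m with
  | zero => intro v u hv; have := depth_pos F v; omega
  | succ m ih =>
    intro v u hv hpre hne
    cases h : F.parent v with
    | none =>
      rw [pathOf_root h] at hpre
      have hpre2 : pathOf F u <+: ([] : List ℕ) ++ [List.idxOf v (children F none)] := by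
        simpa using hpre
      have : pathOf F u = ([] : List ℕ) ++ [List.idxOf v (children F none)] ∨ pathOf F u <+: ([] : List ℕ) :=
        List.prefix_concat_iff.mp hpre2
      simp only [List.nil_append] at this
      rcases this with heq | hnil
      · rw [← pathOf_root h] at heq
        exact absurd (pathOf_inj (F.depth u) u v le_rfl heq) hne
      · have := List.eq_nil_of_prefix_nil hnil
        exact absurd this (pathOf_ne_nil u)
    | some w =>
      rw [pathOf_parent h] at hpre
      rcases List.prefix_concat_iff.mp hpre with heq | hpre'
      · rw [← pathOf_parent h] at heq
        exact absurd (pathOf_inj (F.depth u) u v le_rfl heq) hne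
      · by_cases huw : u = w
        · subst huw
          exact Relation.TransGen.single h
        · have hdw : F.depth v = F.depth w + 1 := F.depth_parent _ _ h
          exact Relation.TransGen.head h (ih w u (by omega) hpre' huw)

end



open RTree

attribute [local instance] Classical.propDecidable

noncomputable section

variable {V : Type} [Fintype V] {F : RootedForest V} {d : ℕ}

lemma card_eq_sizeF (hdd : ∀ v, F.depth v ≤ d) :
    Fintype.card V = sizeF ((children F none).map (build F d hdd)) := by
  set G := (children F none).map (build F d hdd) with hG
  set PL := pathsListF G 0 with hPLdef
  have hmemiff : ∀ t ∈ G, ∀ p, p ∈ pathsList t ↔ IsPath p t := fun t _ p => pathsList_mem t p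
  have hPL : ∀ p, p ∈ PL ↔ FIsPath G p := by
    intro p
    rw [hPLdef, pathsListF_mem G hmemiff 0 p]
    constructor
    · rintro ⟨j, q, rfl, hf⟩
      simpa using hf
    · intro hf
      cases p with
      | nil => exact False.elim hf
      | cons i q => exact ⟨i, q, by simp, hf⟩
  have hnodup : PL.Nodup := pathsListF_nodup G (fun t _ => pathsList_nodup t) 0
  have hbij : Function.Bijective
      (fun v : V => (⟨pathOf F v, by rw [List.mem_toFinset, hPL]; exact encode hdd v⟩ :
        {p // p ∈ PL.toFinset})) := by
    constructor
    · intro v w h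
      have h2 := congrArg Subtype.val h
      exact pathOf_inj (F.depth v) v w le_rfl h2
    · rintro ⟨p, hp⟩
      rw [List.mem_toFinset, hPL] at hp
      obtain ⟨w, hw⟩ := decode hdd p hp
      exact ⟨w, Subtype.ext hw⟩
  have h1 : Fintype.card V = Fintype.card {p // p ∈ PL.toFinset} :=
    Fintype.card_of_bijective hbij
  rw [h1, Fintype.card_coe, List.toFinset_card_of_nodup hnodup]
  exact pathsListF_length G (fun t _ => pathsList_length t) 0

theorem main_assembly (n d : ℕ) (hd : 1 ≤ d)
    (k : ℕ)
    (F : RootedForest V)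
    (hsize : Fintype.card V ≤ 2 ^ k) (hdepth : ∀ v, F.depth v ≤ d)
    (a : ℕ) (ha : 1 ≤ a)
    (hab : a + ⌊cseq k * (Fintype.card V : ℚ)⌋₊ ≤ 3 * n) :
    ∃ L : V → ℕ × ℕ × ℕ,
      (∀ v, L v ∈ Uset n d k (Set.Ico a (a + ⌊cseq k * (Fintype.card V : ℚ)⌋₊))) ∧
      Function.Injective L ∧
      ∀ u v : V, F.Ancestor u v ↔ tripInterval d (L v) ⊂ tripInterval d (L u) := by
  set G := (children F none).map (build F d hdepth) with hG
  have hsize_eq : sizeF G = Fintype.card V := (card_eq_sizeF hdepth).symm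
  have htrees : ∀ t ∈ G, t.size ≤ 2 ^ k ∧ t.depth ≤ d := by
    intro t ht
    constructor
    · have h1 : t.size ≤ sizeF G := List.le_sum_of_mem (List.mem_map_of_mem (f := RTree.size) ht)
      omega
    · obtain ⟨v, hv, rfl⟩ := List.mem_map.mp ht
      have hroot : F.parent v = none := mem_children.mp hv
      have h1 := build_depth hdepth (d + 1 - F.depth v) v le_rfl
      have h2 : F.depth v = 1 := F.depth_root v hroot
      omega
  obtain ⟨f, s⟩ := pack_of_tree (tree_stmt n d hd k) G htrees a ha
    (by rw [hsize_eq]; exact hab)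
  rw [hsize_eq] at s
  have pinj : Function.Injective (pathOf F) := fun v w h => pathOf_inj (F.depth v) v w le_rfl h
  refine ⟨fun v => f (pathOf F v), ?_, ?_, ?_⟩
  · intro v
    exact s.mem _ (encode hdepth v)
  · intro v w h
    by_contra hne
    have h' : f (pathOf F v) = f (pathOf F w) := h
    have hpv := encode (F := F) hdepth v
    have hpw := encode (F := F) hdepth w
    have hnepath : pathOf F v ≠ pathOf F w := fun hh => hne (pinj hh)
    by_cases h1 : pathOf F v <+: pathOf F w
    · have hss := s.nest _ _ hpv hpw h1 hnepath
      rw [h'] at hss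
      exact ssubset_irrefl _ hss
    · by_cases h2 : pathOf F w <+: pathOf F v
      · have hss := s.nest _ _ hpw hpv h2 (Ne.symm hnepath)
        rw [h'] at hss
        exact ssubset_irrefl _ hss
      · have hdisj := s.disj _ _ hpv hpw h1 h2
        have hnem := trip_nonempty_of_mem hd (s.mem _ hpv)
        obtain ⟨y, hy⟩ := hnem
        have hy2 : y ∈ tripInterval d (f (pathOf F w)) := by rw [← h']; exact hy
        exact Set.disjoint_left.mp hdisj hy hy2
  · intro u v
    constructor
    · intro hanc
      obtain ⟨hpre, hlen⟩ := anc_prefix hanc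
      exact s.nest _ _ (encode hdepth u) (encode hdepth v) hpre
        (by intro hh; rw [hh] at hlen; omega)
    · intro hsub
      by_contra hanc
      by_cases hev : u = v
      · subst hev
        exact ssubset_irrefl _ hsub
      · by_cases h1 : pathOf F u <+: pathOf F v
        · exact hanc (prefix_anc (F.depth v) v u le_rfl h1 hev)
        · by_cases h2 : pathOf F v <+: pathOf F u
          · have hvu : F.Ancestor v u := prefix_anc (F.depth u) u v le_rfl h2 (Ne.symm hev)
            obtain ⟨hpre, hlen⟩ := anc_prefix hvu
            have hss := s.nest _ _ (encode hdepth v) (encode hdepth u) hpre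
              (by intro hh; rw [hh] at hlen; omega)
            exact ssubset_asymm hsub hss
          · have hdisj := s.disj _ _ (encode hdepth u) (encode hdepth v) h1 h2
            have hnem := trip_nonempty_of_mem hd (s.mem _ (encode hdepth v))
            obtain ⟨y, hy⟩ := hnem
            exact Set.disjoint_left.mp hdisj (hsub.subset hy) hy

end


end AncMap

/-- Main technical claim: for every `k ≤ log₂ n`, every rooted forest `F` with at
most `2^k` nodes and depth at most `d`, and every interval `I = [a, a + ⌊c_k·|F|⌋)`
contained in `[1, 3n)`, there is an ancestry mapping of `F` into `U_k(I)`,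
i.e. an injection `L` such that `u` is a strict ancestor of `v` iff the interval
associated with `L v` is strictly contained in the one associated with `L u`. -/
theorem ancestry_mapping_exists (n d : ℕ) (hn : ∃ m : ℕ, n = 2 ^ m) (hd : 1 ≤ d)
    (k : ℕ) (hk : k ≤ Nat.log 2 n)
    (V : Type) [Fintype V] (F : RootedForest V)
    (hsize : Fintype.card V ≤ 2 ^ k) (hdepth : ∀ v, F.depth v ≤ d)
    (a : ℕ) (ha : 1 ≤ a)
    (hab : a + ⌊cseq k * (Fintype.card V : ℚ)⌋₊ ≤ 3 * n) :
    ∃ L : V → ℕ × ℕ × ℕ,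
      (∀ v, L v ∈ Uset n d k (Set.Ico a (a + ⌊cseq k * (Fintype.card V : ℚ)⌋₊))) ∧
      Function.Injective L ∧
      ∀ u v : V, F.Ancestor u v ↔ tripInterval d (L v) ⊂ tripInterval d (L u) := by
  exact AncMap.main_assembly n d hd k F hsize hdepth a ha hab
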